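/- Let Z ~ Bernoulli(1/2), ε1 ~ Bernoulli(1/12), ε3 ~ Bernoulli(1/11) mutually independent, Y = |Z − ε1|, X3 = |Y − ε3|. Then P(Y=1 | Z=1, X3=0) = 11/21 and P(Y=0 | Z=0, X3=1) = 11/21; in particular both exceed 1/2. -/

import Mathlib

open MeasureTheory

private lemma enn12 : (1/2 : ENNReal) = ((1/2 : NNReal) : ENNReal) := by
  rw [ENNReal.coe_div (by norm_num)]; norm_num
private lemma enn112 : (1/12 : ENNReal) = ((1/12 : NNReal) : ENNReal) := by
  rw [ENNReal.coe_div (by norm_num)]; norm_num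
private lemma enn1112 : (11/12 : ENNReal) = ((11/12 : NNReal) : ENNReal) := by
  rw [ENNReal.coe_div (by norm_num)]; norm_num
private lemma enn111 : (1/11 : ENNReal) = ((1/11 : NNReal) : ENNReal) := by
  rw [ENNReal.coe_div (by norm_num)]; norm_num
private lemma enn1011 : (10/11 : ENNReal) = ((10/11 : NNReal) : ENNReal) := by
  rw [ENNReal.coe_div (by norm_num)]; norm_num
private lemma enn11264 : (11/264 : ENNReal) = ((11/264 : NNReal) : ENNReal) := by
  rw [ENNReal.coe_div (by norm_num)]; norm_num
private lemma enn10264 : (10/264 : ENNReal) = ((10/264 : NNReal) : ENNReal) := by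
  rw [ENNReal.coe_div (by norm_num)]; norm_num
private lemma enn21264 : (21/264 : ENNReal) = ((21/264 : NNReal) : ENNReal) := by
  rw [ENNReal.coe_div (by norm_num)]; norm_num
private lemma enn1121 : (11/21 : ENNReal) = ((11/21 : NNReal) : ENNReal) := by
  rw [ENNReal.coe_div (by norm_num)]; norm_num

private lemma L1 : (1:ENNReal) - 1/2 = 1/2 := by
  apply ENNReal.sub_eq_of_eq_add (by simp [ENNReal.div_eq_top])
  rw [enn12, ← ENNReal.coe_add,
    show ((1:NNReal)/2 + 1/2) = 1 by rw [← add_div]; norm_num, ENNReal.coe_one]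
private lemma L2 : (1:ENNReal) - 1/12 = 11/12 := by
  apply ENNReal.sub_eq_of_eq_add (by simp [ENNReal.div_eq_top])
  rw [enn1112, enn112, ← ENNReal.coe_add,
    show ((11:NNReal)/12 + 1/12) = 1 by rw [← add_div]; norm_num, ENNReal.coe_one]
private lemma L3 : (1:ENNReal) - 1/11 = 10/11 := by
  apply ENNReal.sub_eq_of_eq_add (by simp [ENNReal.div_eq_top])
  rw [enn1011, enn111, ← ENNReal.coe_add,
    show ((10:NNReal)/11 + 1/11) = 1 by rw [← add_div]; norm_num, ENNReal.coe_one]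
private lemma L4 : (1/2:ENNReal)*(11/12)*(1/11) = 11/264 := by
  rw [enn12, enn1112, enn111, enn11264, ← ENNReal.coe_mul, ← ENNReal.coe_mul,
    ENNReal.coe_inj, div_mul_div_comm, div_mul_div_comm]
  norm_num
private lemma L5 : (1/2:ENNReal)*(1/12)*(10/11) = 10/264 := by
  rw [enn12, enn112, enn1011, enn10264, ← ENNReal.coe_mul, ← ENNReal.coe_mul,
    ENNReal.coe_inj, div_mul_div_comm, div_mul_div_comm]
  norm_num
private lemma L6 : (11/264:ENNReal)+10/264 = 21/264 := by
  rw [enn11264, enn10264, enn21264, ← ENNReal.coe_add, ENNReal.coe_inj, ← add_div]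
  norm_num
private lemma L7 : (11/264:ENNReal)/(21/264) = 11/21 := by
  rw [enn11264, enn21264, ← ENNReal.coe_div (by norm_num), enn1121, ENNReal.coe_inj,
    div_eq_div_iff (by norm_num) (by norm_num), div_mul_eq_mul_div, mul_div_assoc]
private lemma L8 : (1/2:ENNReal) < 11/21 := by
  rw [enn12, enn1121, ENNReal.coe_lt_coe, div_lt_div_iff₀ (by norm_num) (by norm_num)]
  norm_num

/-- With `Z ~ Bernoulli(1/2)`, `ε1 ~ Bernoulli(1/12)`, `ε3 ~ Bernoulli(1/11)` mutually
independent, `Y = Z XOR ε1`, `X3 = Y XOR ε3`: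
`P(Y=1 | Z=1, X3=0) = 11/21` and `P(Y=0 | Z=0, X3=1) = 11/21`, both exceeding `1/2`. -/
theorem stmt8 {Ω : Type*} [MeasurableSpace Ω] (μ : Measure Ω) [IsProbabilityMeasure μ]
    (Z ε1 ε3 Y X3 : Ω → Bool)
    (hmZ : Measurable Z) (hmε1 : Measurable ε1) (hmε3 : Measurable ε3)
    (hZ : μ {ω | Z ω = true} = 1 / 2)
    (hε1 : μ {ω | ε1 ω = true} = 1 / 12)
    (hε3 : μ {ω | ε3 ω = true} = 1 / 11)
    (hindep : ∀ a b c : Bool,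
      μ {ω | Z ω = a ∧ ε1 ω = b ∧ ε3 ω = c} =
        μ {ω | Z ω = a} * μ {ω | ε1 ω = b} * μ {ω | ε3 ω = c})
    (hY : ∀ ω, Y ω = xor (Z ω) (ε1 ω))
    (hX3 : ∀ ω, X3 ω = xor (Y ω) (ε3 ω)) :
    μ {ω | Y ω = true ∧ Z ω = true ∧ X3 ω = false} /
        μ {ω | Z ω = true ∧ X3 ω = false} = 11 / 21 ∧
      μ {ω | Y ω = false ∧ Z ω = false ∧ X3 ω = true} /
        μ {ω | Z ω = false ∧ X3 ω = true} = 11 / 21 ∧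
      (1 / 2 : ENNReal) < 11 / 21 := by
  have hmsZ : MeasurableSet {ω | Z ω = true} := hmZ (measurableSet_singleton true)
  have hmsε1 : MeasurableSet {ω | ε1 ω = true} := hmε1 (measurableSet_singleton true)
  have hmsε3 : MeasurableSet {ω | ε3 ω = true} := hmε3 (measurableSet_singleton true)
  have hZf : μ {ω | Z ω = false} = 1 / 2 := by
    have h : {ω | Z ω = false} = {ω | Z ω = true}ᶜ := by ext ω; simp
    rw [h, measure_compl hmsZ (measure_ne_top μ _), hZ, measure_univ, L1]
  have hε1f : μ {ω | ε1 ω = false} = 11 / 12 := by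
    have h : {ω | ε1 ω = false} = {ω | ε1 ω = true}ᶜ := by ext ω; simp
    rw [h, measure_compl hmsε1 (measure_ne_top μ _), hε1, measure_univ, L2]
  have hε3f : μ {ω | ε3 ω = false} = 10 / 11 := by
    have h : {ω | ε3 ω = false} = {ω | ε3 ω = true}ᶜ := by ext ω; simp
    rw [h, measure_compl hmsε3 (measure_ne_top μ _), hε3, measure_univ, L3]
  -- measurability of atom events
  have hms : ∀ a b c : Bool, MeasurableSet {ω | Z ω = a ∧ ε1 ω = b ∧ ε3 ω = c} :=
    fun a b c => (hmZ (measurableSet_singleton a)).inter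
      ((hmε1 (measurableSet_singleton b)).inter (hmε3 (measurableSet_singleton c)))
  -- atom measures
  have hA1 : μ {ω | Z ω = true ∧ ε1 ω = false ∧ ε3 ω = true} = 11 / 264 := by
    rw [hindep, hZ, hε1f, hε3, L4]
  have hA2 : μ {ω | Z ω = true ∧ ε1 ω = true ∧ ε3 ω = false} = 10 / 264 := by
    rw [hindep, hZ, hε1, hε3f, L5]
  have hB1 : μ {ω | Z ω = false ∧ ε1 ω = false ∧ ε3 ω = true} = 11 / 264 := by
    rw [hindep, hZf, hε1f, hε3, L4]
  have hB2 : μ {ω | Z ω = false ∧ ε1 ω = true ∧ ε3 ω = false} = 10 / 264 := by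
    rw [hindep, hZf, hε1, hε3f, L5]
  -- set identities
  have hN1 : {ω | Y ω = true ∧ Z ω = true ∧ X3 ω = false}
      = {ω | Z ω = true ∧ ε1 ω = false ∧ ε3 ω = true} := by
    ext ω
    simp only [Set.mem_setOf_eq, hY ω, hX3 ω]
    cases Z ω <;> cases ε1 ω <;> cases ε3 ω <;> simp
  have hD1 : {ω | Z ω = true ∧ X3 ω = false}
      = {ω | Z ω = true ∧ ε1 ω = false ∧ ε3 ω = true}
        ∪ {ω | Z ω = true ∧ ε1 ω = true ∧ ε3 ω = false} := by
    ext ω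
    simp only [Set.mem_setOf_eq, Set.mem_union, hY ω, hX3 ω]
    cases Z ω <;> cases ε1 ω <;> cases ε3 ω <;> simp
  have hN2 : {ω | Y ω = false ∧ Z ω = false ∧ X3 ω = true}
      = {ω | Z ω = false ∧ ε1 ω = false ∧ ε3 ω = true} := by
    ext ω
    simp only [Set.mem_setOf_eq, hY ω, hX3 ω]
    cases Z ω <;> cases ε1 ω <;> cases ε3 ω <;> simp
  have hD2 : {ω | Z ω = false ∧ X3 ω = true}
      = {ω | Z ω = false ∧ ε1 ω = false ∧ ε3 ω = true}
        ∪ {ω | Z ω = false ∧ ε1 ω = true ∧ ε3 ω = false} := by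
    ext ω
    simp only [Set.mem_setOf_eq, Set.mem_union, hY ω, hX3 ω]
    cases Z ω <;> cases ε1 ω <;> cases ε3 ω <;> simp
  -- disjointness
  have hdisj : ∀ a : Bool,
      Disjoint {ω | Z ω = a ∧ ε1 ω = false ∧ ε3 ω = true}
        {ω | Z ω = a ∧ ε1 ω = true ∧ ε3 ω = false} := by
    intro a
    rw [Set.disjoint_left]
    rintro ω ⟨_, h1, _⟩ ⟨_, h2, _⟩
    simp [h1] at h2
  refine ⟨?_, ?_, L8⟩
  · rw [hN1, hD1, measure_union (hdisj true) (hms true true false), hA1, hA2, L6, L7]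
  · rw [hN2, hD2, measure_union (hdisj false) (hms false true false), hB1, hB2, L6, L7]
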